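/- arXiv:2111.08611 — 4 statements merged into one kernel-verified Lean document; each statement's English description precedes it below -/
import Mathlib

section
/- Let μ_1, …, μ_n ∈ ℝ and for each b-element subset S ⊆ {1,…,n} let μ_S = (1/b)∑_{i∈S} μ_i. Define μ̄ = (1/n)∑_{i: μ_i ≥ 0} μ_i + (4/n)∑_{i: μ_i < 0} μ_i and μ̄_{b-NICE} = (1/C(n,b))(∑_{S: μ_S ≥ 0} μ_S + 4∑_{S: μ_S < 0} μ_S). Then μ̄_{b-NICE} ≥ μ̄. -/
open Finset

lemma count_containing {n b : ℕ} (hb1 : 1 ≤ b) (i : Fin n) :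
    ((Finset.powersetCard b (Finset.univ : Finset (Fin n))).filter
      (fun S => i ∈ S)).card = (n - 1).choose (b - 1) := by
  have hc : ((Finset.univ : Finset (Fin n)).erase i).card = n - 1 := by
    rw [Finset.card_erase_of_mem (Finset.mem_univ i), Finset.card_univ, Fintype.card_fin]
  rw [← hc, ← Finset.card_powersetCard (b - 1) ((Finset.univ : Finset (Fin n)).erase i)]
  · apply Finset.card_bij' (fun S _ => S.erase i) (fun T _ => insert i T)
    · intro S hS
      simp only [mem_filter] at hS
      exact Finset.insert_erase hS.2
    · intro T hT
      simp only [mem_powersetCard] at hT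
      have hi : i ∉ T := fun h => by
        have := hT.1 h; simp [Finset.mem_erase] at this
      exact Finset.erase_insert hi
    · intro S hS
      simp only [mem_filter, mem_powersetCard] at hS
      simp only [mem_powersetCard]
      constructor
      · intro x hx
        simp only [Finset.mem_erase] at hx ⊢
        exact ⟨hx.1, Finset.mem_univ x⟩
      · rw [Finset.card_erase_of_mem hS.2, hS.1.2]
    · intro T hT
      simp only [mem_powersetCard] at hT
      have hi : i ∉ T := fun h => by
        have := hT.1 h; simp [Finset.mem_erase] at this
      simp only [mem_filter, mem_powersetCard]
      refine ⟨⟨fun x _ => Finset.mem_univ x, ?_⟩, Finset.mem_insert_self i T⟩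
      rw [Finset.card_insert_of_notMem hi, hT.2]
      omega

theorem stmt_12 {n : ℕ} (b : ℕ) (hb1 : 1 ≤ b) (hbn : b ≤ n) (μ : Fin n → ℝ)
    (μS : Finset (Fin n) → ℝ)
    (hμS : ∀ S, μS S = (1 / (b : ℝ)) * ∑ i ∈ S, μ i) :
    ((1 : ℝ) / (n.choose b)) *
        ((∑ S ∈ (Finset.powersetCard b (Finset.univ : Finset (Fin n))).filter
            (fun S => 0 ≤ μS S), μS S) +
         4 * ∑ S ∈ (Finset.powersetCard b (Finset.univ : Finset (Fin n))).filter
            (fun S => μS S < 0), μS S) ≥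
      (1 / (n : ℝ)) * ∑ i ∈ Finset.univ.filter (fun i => 0 ≤ μ i), μ i +
      (4 / (n : ℝ)) * ∑ i ∈ Finset.univ.filter (fun i => μ i < 0), μ i := by
  have hn : 1 ≤ n := le_trans hb1 hbn
  have hbpos : (0:ℝ) < b := by exact_mod_cast hb1
  have hnpos : (0:ℝ) < n := by exact_mod_cast hn
  have hCpos : (0:ℝ) < (n.choose b : ℝ) := by exact_mod_cast Nat.choose_pos hbn
  set g : Fin n → ℝ := fun i => min (μ i) (4 * μ i) with hg
  set P := (Finset.powersetCard b (Finset.univ : Finset (Fin n))) with hP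
  have combine : ∀ {α : Type} (s : Finset α) (f : α → ℝ),
      (∑ x ∈ s.filter (fun x => 0 ≤ f x), f x) + 4 * ∑ x ∈ s.filter (fun x => f x < 0), f x
        = ∑ x ∈ s, min (f x) (4 * f x) := by
    intro α s f
    rw [mul_sum, ← Finset.sum_filter_add_sum_filter_not s (fun x => 0 ≤ f x)]
    congr 1
    · exact Finset.sum_congr rfl fun x hx => by
        simp only [mem_filter] at hx
        rw [min_eq_left]; linarith [hx.2]
    · apply Finset.sum_congr
      · congr 1; ext x; simp [not_le]
      · intro x hx
        simp only [mem_filter, not_le] at hx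
        rw [min_eq_right]; linarith [hx.2]
  -- rewrite LHS
  rw [combine P μS]
  -- rewrite RHS
  have hrhs : (1 / (n : ℝ)) * ∑ i ∈ Finset.univ.filter (fun i => 0 ≤ μ i), μ i +
      (4 / (n : ℝ)) * ∑ i ∈ Finset.univ.filter (fun i => μ i < 0), μ i
      = (1 / (n : ℝ)) * ∑ i, g i := by
    rw [← combine Finset.univ μ]; ring
  rw [hrhs]
  -- pointwise concavity bound
  have key : ∀ S ∈ P, (1/(b:ℝ)) * ∑ i ∈ S, g i ≤ min (μS S) (4 * μS S) := by
    intro S _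
    rw [hμS]
    have h1 : ∑ i ∈ S, g i ≤ ∑ i ∈ S, μ i :=
      Finset.sum_le_sum fun i _ => min_le_left _ _
    have h2 : ∑ i ∈ S, g i ≤ 4 * ∑ i ∈ S, μ i := by
      rw [mul_sum]
      exact Finset.sum_le_sum fun i _ => min_le_right _ _
    rw [le_min_iff]
    constructor
    · exact mul_le_mul_of_nonneg_left h1 (by positivity)
    · calc (1/(b:ℝ)) * ∑ i ∈ S, g i ≤ (1/(b:ℝ)) * (4 * ∑ i ∈ S, μ i) :=
            mul_le_mul_of_nonneg_left h2 (by positivity)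
        _ = 4 * ((1/(b:ℝ)) * ∑ i ∈ S, μ i) := by ring
  -- double counting
  have hdc : ∑ S ∈ P, ∑ i ∈ S, g i = ((n-1).choose (b-1) : ℝ) * ∑ i, g i := by
    calc ∑ S ∈ P, ∑ i ∈ S, g i
        = ∑ S ∈ P, ∑ i, if i ∈ S then g i else 0 := by
          refine Finset.sum_congr rfl fun S _ => ?_
          rw [Finset.sum_ite_mem, Finset.univ_inter]
      _ = ∑ i, ∑ S ∈ P, if i ∈ S then g i else 0 := Finset.sum_comm
      _ = ∑ i, ((P.filter (fun S => i ∈ S)).card : ℝ) * g i := by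
          refine Finset.sum_congr rfl fun i _ => ?_
          rw [← Finset.sum_filter, Finset.sum_const, nsmul_eq_mul]
      _ = ((n-1).choose (b-1) : ℝ) * ∑ i, g i := by
          rw [mul_sum]
          exact Finset.sum_congr rfl fun i _ => by rw [count_containing hb1 i]
  have hsum : (1/(b:ℝ)) * (((n-1).choose (b-1) : ℝ) * ∑ i, g i)
      ≤ ∑ S ∈ P, min (μS S) (4 * μS S) := by
    rw [← hdc, mul_sum]
    exact Finset.sum_le_sum key
  -- the binomial identity
  have hid : (n : ℝ) * ((n-1).choose (b-1) : ℝ) = ((n.choose b : ℕ) : ℝ) * b := by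
    have : n * (n-1).choose (b-1) = n.choose b * b := by
      obtain ⟨m, rfl⟩ : ∃ m, n = m + 1 := ⟨n - 1, by omega⟩
      obtain ⟨k, rfl⟩ : ∃ k, b = k + 1 := ⟨b - 1, by omega⟩
      simp only [Nat.add_sub_cancel]
      exact Nat.add_one_mul_choose_eq m k
    exact_mod_cast this
  -- finish
  have hfin : ((1 : ℝ) / (n.choose b)) * ((1/(b:ℝ)) * (((n-1).choose (b-1) : ℝ) * ∑ i, g i))
      = (1 / (n : ℝ)) * ∑ i, g i := by
    field_simp
    linear_combination (∑ i, g i) * hid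
  calc (1 / (n : ℝ)) * ∑ i, g i
      = ((1 : ℝ) / (n.choose b)) * ((1/(b:ℝ)) * (((n-1).choose (b-1) : ℝ) * ∑ i, g i)) :=
        hfin.symm
    _ ≤ ((1 : ℝ) / (n.choose b)) * ∑ S ∈ P, min (μS S) (4 * μS S) :=
        mul_le_mul_of_nonneg_left hsum (by positivity)
end

section
/- Let F : ℝ^d → ℝ^d be L-Lipschitz and μ-quasi strongly monotone with F(x*) = 0 and μ > 0. For the deterministic extragradient step x⁺ = x − αγ F(x − γ F(x)) with 0 < α ≤ 1/4 and 0 < γ ≤ 1/(6L), one has ‖x⁺ − x*‖² ≤ (1 − αγμ/2)‖x − x*‖². -/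
set_option maxHeartbeats 1000000


theorem stmt_15 {d : ℕ} (F : EuclideanSpace ℝ (Fin d) → EuclideanSpace ℝ (Fin d))
    (L μ α γ : ℝ) (xstar : EuclideanSpace ℝ (Fin d))
    (hL : ∀ x y, ‖F x - F y‖ ≤ L * ‖x - y‖)
    (hmono : ∀ x, (inner ℝ (F x) (x - xstar) : ℝ) ≥ μ * ‖x - xstar‖ ^ 2)
    (hstar : F xstar = 0) (hμ : 0 < μ)
    (hα0 : 0 < α) (hα : α ≤ 1 / 4) (hγ0 : 0 < γ) (hγ : γ ≤ 1 / (6 * L)) :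
    ∀ x, ‖(x - (α * γ) • F (x - γ • F x)) - xstar‖ ^ 2 ≤
      (1 - α * γ * μ / 2) * ‖x - xstar‖ ^ 2 := by
  have hL0 : 0 < L := by
    by_contra h
    push_neg at h
    have h6 : 6 * L ≤ 0 := by linarith
    rcases lt_or_eq_of_le h6 with h' | h'
    · have : (1 : ℝ) / (6 * L) < 0 := div_neg_of_pos_of_neg one_pos h'
      linarith
    · rw [h'] at hγ
      norm_num at hγ
      linarith
  have hLγ : L * γ ≤ 1 / 6 := by
    have := (le_div_iff₀ (by positivity : (0:ℝ) < 6 * L)).mp hγ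
    nlinarith
  intro x
  set g := F x with hg
  set xt := x - γ • g with hxt
  set gt := F xt with hgt
  set r := x - xstar with hr
  have key : x - (α * γ) • gt - xstar = r - (α * γ) • gt := by
    rw [hr]; abel
  rw [key]
  -- abbreviations
  set A := ‖r‖ with hA
  set B := ‖g‖ with hB
  set C := ‖gt‖ with hC
  set D := ‖xt - xstar‖ with hD
  have hA0 : 0 ≤ A := norm_nonneg _
  have hB0 : 0 ≤ B := norm_nonneg _
  have hC0 : 0 ≤ C := norm_nonneg _
  have hD0 : 0 ≤ D := norm_nonneg _
  set E := ‖gt - g‖ with hE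
  have hE0 : 0 ≤ E := norm_nonneg _
  set I3 := (inner ℝ gt (xt - xstar) : ℝ) with hI3d
  set I2v := (inner ℝ gt g : ℝ) with hI2d
  -- expansion of the squared norm
  have e1 : ‖r - (α * γ) • gt‖ ^ 2
      = A ^ 2 - 2 * (α * γ) * (I3 + γ * I2v) + (α * γ) ^ 2 * C ^ 2 := by
    have hdec : r = (xt - xstar) + γ • g := by rw [hr, hxt]; abel
    have e2 : (inner ℝ r gt : ℝ) = I3 + γ * I2v := by
      rw [hdec, inner_add_left, real_inner_smul_left, hI3d, hI2d,
        real_inner_comm gt (xt - xstar), real_inner_comm gt g]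
    rw [norm_sub_sq_real, real_inner_smul_right, norm_smul, e2]
    have : |α * γ| = α * γ := abs_of_pos (by positivity)
    rw [Real.norm_eq_abs, this]
    ring
  have hdec : r = (xt - xstar) + γ • g := by rw [hr, hxt]; abel
  -- quasi-strong monotonicity at xt
  have hI3 : I3 ≥ μ * D ^ 2 := hmono xt
  -- 2⟨gt,g⟩ = C² + B² - ‖gt-g‖²
  have e3 : E ^ 2 = C ^ 2 - 2 * I2v + B ^ 2 := norm_sub_sq_real gt g
  -- ‖gt - g‖ ≤ L γ B
  have hgtg : E ≤ L * γ * B := by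
    have := hL xt x
    have hxtx : ‖xt - x‖ = γ * B := by
      rw [hxt]
      have : x - γ • g - x = -(γ • g) := by abel
      rw [this, norm_neg, norm_smul, Real.norm_eq_abs, abs_of_pos hγ0]
    calc E ≤ L * ‖xt - x‖ := this
      _ = L * γ * B := by rw [hxtx]; ring
  -- A ≤ D + γ B
  have hAD : A ≤ D + γ * B := by
    calc A = ‖(xt - xstar) + γ • g‖ := by rw [hA, hdec]
      _ ≤ D + ‖γ • g‖ := norm_add_le _ _
      _ = D + γ * B := by rw [norm_smul, Real.norm_eq_abs, abs_of_pos hγ0]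
  -- B ≤ L A
  have hBA : B ≤ L * A := by
    have := hL x xstar
    rw [hstar, sub_zero] at this
    exact this
  clear_value A B C D E I3 I2v
  -- squared consequences
  have hgtg2 : E ^ 2 ≤ (L * γ * B) ^ 2 := by nlinarith [hgtg, hE0]
  have hAD2 : A ^ 2 ≤ 2 * D ^ 2 + 2 * γ ^ 2 * B ^ 2 := by nlinarith [hAD, sq_nonneg (D - γ * B)]
  have hBA2 : B ^ 2 ≤ L ^ 2 * A ^ 2 := by
    have := pow_le_pow_left₀ hB0 hBA 2
    calc B ^ 2 ≤ (L * A) ^ 2 := this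
      _ = L ^ 2 * A ^ 2 := by ring
  have hI2 : 2 * I2v ≥ C ^ 2 + B ^ 2 - (L * γ * B) ^ 2 := by
    nlinarith [e3, hgtg2]
  rw [e1]
  clear hmono hL hstar key hdec e1 e3 hgtg hAD hBA hgtg2 hγ hr hg hxt hgt hA hB hC hD hE hI3d hI2d
  clear F xstar x g xt gt r
  have hαγ0 : (0:ℝ) ≤ α * γ := by positivity
  have p1 : α * γ * (μ * D ^ 2) ≤ α * γ * I3 :=
    mul_le_mul_of_nonneg_left hI3 hαγ0
  have p2 : α * γ ^ 2 * (C ^ 2 + B ^ 2 - (L * γ * B) ^ 2)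
      ≤ α * γ ^ 2 * (2 * I2v) :=
    mul_le_mul_of_nonneg_left hI2 (by positivity)
  have p4 : α * γ * μ * (A ^ 2 - 2 * γ ^ 2 * B ^ 2) ≤ α * γ * μ * (2 * D ^ 2) :=
    mul_le_mul_of_nonneg_left (by linarith [hAD2]) (by positivity)
  have p5 : (α * γ) ^ 2 * C ^ 2 ≤ α * γ ^ 2 * C ^ 2 := by
    have h1 : (0:ℝ) ≤ α * (1 - α) * (γ ^ 2 * C ^ 2) := by
      have : (0:ℝ) ≤ 1 - α := by linarith
      positivity
    nlinarith [h1]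
  have hLγ2 : (L * γ) ^ 2 ≤ 1 / 36 := by
    have h1 : L * γ * (L * γ) ≤ (1/6 : ℝ) * (1/6) :=
      mul_le_mul hLγ hLγ (le_of_lt (mul_pos hL0 hγ0)) (by norm_num)
    calc (L * γ) ^ 2 = L * γ * (L * γ) := sq (L * γ)
      _ ≤ (1/6 : ℝ) * (1/6) := h1
      _ = 1 / 36 := by norm_num
  have p6 : α * γ ^ 2 * (L * γ * B) ^ 2 ≤ α * γ ^ 2 * ((1 / 36) * B ^ 2) := by
    have : (L * γ * B) ^ 2 ≤ (1 / 36) * B ^ 2 := by nlinarith [sq_nonneg B]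
    exact mul_le_mul_of_nonneg_left this (by positivity)
  have p7 : α * γ * μ * (γ ^ 2 * B ^ 2) ≤ α * γ * μ * ((1 / 36) * A ^ 2) := by
    have h1 : γ ^ 2 * B ^ 2 ≤ γ ^ 2 * (L ^ 2 * A ^ 2) :=
      mul_le_mul_of_nonneg_left hBA2 (sq_nonneg γ)
    have h2 : γ ^ 2 * (L ^ 2 * A ^ 2) ≤ (1 / 36) * A ^ 2 := by
      nlinarith [sq_nonneg A, hLγ2]
    exact mul_le_mul_of_nonneg_left (le_trans h1 h2) (by positivity)
  have p8 : (0:ℝ) ≤ α * γ ^ 2 * B ^ 2 := by positivity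
  have p9 : (0:ℝ) ≤ α * γ * μ * A ^ 2 := by positivity
  linarith [p1, p2, p4, p5, p6, p7, p8, p9]
end

section
/- Let F : ℝ^d → ℝ^d be L-Lipschitz with F(x*) = 0 and 0 ≤ μ ≤ L satisfying ⟨F(x) − F(x*), x − x*⟩ ≥ μ‖x − x*‖² for all x. For g = F(x − γF(x)) with 0 < γ ≤ 1/(4μ + √2 L), one has γ²‖g‖² ≤ 4γ⟨g, x − x*⟩. -/
set_option maxHeartbeats 1000000


theorem stmt_17 {d : ℕ} (F : EuclideanSpace ℝ (Fin d) → EuclideanSpace ℝ (Fin d))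
    (L μ γ : ℝ) (x xstar : EuclideanSpace ℝ (Fin d))
    (hL : ∀ y z, ‖F y - F z‖ ≤ L * ‖y - z‖)
    (hμ0 : 0 ≤ μ) (hμL : μ ≤ L)
    (hmono : ∀ y, (inner ℝ (F y - F xstar) (y - xstar) : ℝ) ≥ μ * ‖y - xstar‖ ^ 2)
    (hstar : F xstar = 0)
    (hγ0 : 0 < γ) (hγ : γ ≤ 1 / (4 * μ + Real.sqrt 2 * L)) :
    γ ^ 2 * ‖F (x - γ • F x)‖ ^ 2 ≤
      4 * (γ * (inner ℝ (F (x - γ • F x)) (x - xstar) : ℝ)) := by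
  have hL0 : 0 ≤ L := le_trans hμ0 hμL
  set u := x - γ • F x with hu
  set g := F u with hg
  -- Lipschitz bound on the step
  have hsqrt2 : (0:ℝ) < Real.sqrt 2 := by positivity
  have hLγ : Real.sqrt 2 * L * γ ≤ 1 := by
    rcases eq_or_lt_of_le hL0 with h0 | hLpos
    · rcases eq_or_lt_of_le hμ0 with hμ | hμ
      · exfalso
        rw [← hμ, ← h0] at hγ
        simp at hγ
        linarith
      · nlinarith [hγ, mul_le_mul_of_nonneg_right hγ (le_of_lt hγ0)]
    · have hden : 0 < 4 * μ + Real.sqrt 2 * L := by positivity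
      have h1 : γ * (4 * μ + Real.sqrt 2 * L) ≤ 1 := (le_div_iff₀ hden).mp hγ
      nlinarith
  have hLγ2 : (L * γ) ^ 2 ≤ 1 / 2 := by
    nlinarith [Real.sq_sqrt (by norm_num : (2:ℝ) ≥ 0), mul_nonneg hL0 hγ0.le, hsqrt2.le]
  -- decomposition of the inner product
  have hdecomp : x - xstar = (u - xstar) + γ • F x := by rw [hu]; abel
  have hsplit : (inner ℝ g (x - xstar) : ℝ)
      = (inner ℝ g (u - xstar) : ℝ) + γ * (inner ℝ g (F x) : ℝ) := by
    rw [hdecomp, inner_add_right, real_inner_smul_right]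
  -- monotonicity term is nonnegative
  have hmono' : (0:ℝ) ≤ (inner ℝ g (u - xstar) : ℝ) := by
    have h := hmono u
    rw [hstar, sub_zero] at h
    have : (0:ℝ) ≤ μ * ‖u - xstar‖ ^ 2 := by positivity
    linarith
  -- Lipschitz estimate
  have hux : ‖u - x‖ = γ * ‖F x‖ := by
    have : u - x = -(γ • F x) := by rw [hu]; abel
    rw [this, norm_neg, norm_smul, Real.norm_eq_abs, abs_of_pos hγ0]
  have hdist : ‖g - F x‖ ≤ L * γ * ‖F x‖ := by
    have h := hL u x
    rw [hux] at h
    linarith [h]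
  have hdist2 : ‖g - F x‖ ^ 2 ≤ (1/2) * ‖F x‖ ^ 2 := by
    have h1 : ‖g - F x‖ ^ 2 ≤ (L * γ * ‖F x‖) ^ 2 := by
      have := norm_nonneg (g - F x)
      nlinarith
    have h2 : (L * γ * ‖F x‖) ^ 2 = (L * γ)^2 * ‖F x‖^2 := by ring
    nlinarith [sq_nonneg ‖F x‖]
  -- polarization
  have hpol : ‖g - F x‖ ^ 2 = ‖g‖ ^ 2 - 2 * (inner ℝ g (F x) : ℝ) + ‖F x‖ ^ 2 := by
    exact norm_sub_sq_real g (F x)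
  have hinner : (inner ℝ g (F x) : ℝ) ≥ ‖g‖ ^ 2 / 2 := by nlinarith
  -- conclude
  rw [hsplit]
  nlinarith [sq_nonneg γ, mul_le_mul_of_nonneg_left hinner hγ0.le,
    mul_nonneg hγ0.le hmono']
end

section
/- If a nonnegative sequence r_k satisfies r_{k+1} ≤ (1 − aγ_k) r_k + cγ_k² for all k, with a, c ≥ 0, constants h ≥ a, h > 0, and γ_k chosen as: γ_k = 1/h when K ≤ h/a or k < ⌈K/2⌉, and γ_k = 2/(a(2h/a + k − ⌈K/2⌉)) otherwise; then r_K ≤ (32h/a) r_0 exp(−aK/(2h)) + 36c/(a²K). -/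
lemma stich_phase1 {r γ : ℕ → ℝ} {a c h : ℝ} (ha : 0 < a) (hc : 0 ≤ c) (hha : a ≤ h)
    (hrec : ∀ k, r (k + 1) ≤ (1 - a * γ k) * r k + c * γ k ^ 2)
    (n : ℕ) (hγn : ∀ k < n, γ k = 1 / h) :
    r n ≤ (1 - a / h) ^ n * r 0 + c / (a * h) := by
  have hh : 0 < h := lt_of_lt_of_le ha hha
  induction n with
  | zero =>
    have : 0 ≤ c / (a * h) := by positivity
    simp only [pow_zero, one_mul]; linarith
  | succ n ih =>
    have ih' := ih (fun k hk => hγn k (Nat.lt_succ_of_lt hk))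
    have hg := hrec n
    rw [hγn n (Nat.lt_succ_self n)] at hg
    have h1 : 0 ≤ 1 - a / h := by
      rw [sub_nonneg]; exact (div_le_one hh).mpr hha
    have h2 : (1 - a / h) * r n ≤ (1 - a / h) * ((1 - a / h) ^ n * r 0 + c / (a * h)) :=
      mul_le_mul_of_nonneg_left ih' h1
    have key : (1 - a / h) * ((1 - a / h) ^ n * r 0 + c / (a * h)) + c * (1 / h) ^ 2
        = (1 - a / h) ^ (n + 1) * r 0 + c / (a * h) := by
      rw [pow_succ (1 - a / h) n]; generalize (1 - a / h) ^ n = P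
      field_simp
      ring
    have hg' : r (n + 1) ≤ (1 - a / h) * r n + c * (1 / h) ^ 2 := by
      have : a * (1 / h) = a / h := by ring
      rw [this] at hg; exact hg
    linarith

lemma stich_phase2 {r γ : ℕ → ℝ} {a c h : ℝ} (ha : 0 < a) (hha : a ≤ h)
    (hr : ∀ k, 0 ≤ r k)
    (hrec : ∀ k, r (k + 1) ≤ (1 - a * γ k) * r k + c * γ k ^ 2)
    (t0 : ℕ) (hγ2 : ∀ t : ℕ, γ (t0 + t) = 2 / (a * (2 * h / a + t))) :
    ∀ t : ℕ, (2 * h / a + t - 1) ^ 2 * r (t0 + t) ≤ (2 * h / a - 1) ^ 2 * r t0 + 4 * c * t / a ^ 2 := by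
  have hh : 0 < h := lt_of_lt_of_le ha hha
  have hβ2 : 2 ≤ 2 * h / a := by rw [le_div_iff₀ ha]; linarith
  intro t
  induction t with
  | zero => norm_num
  | succ t ih =>
    have htn : (0:ℝ) ≤ t := Nat.cast_nonneg t
    have hD : 0 < 2 * h / a + t := by linarith
    have hg := hrec (t0 + t)
    rw [hγ2 t] at hg
    have e1 : (1 - a * (2 / (a * (2 * h / a + ↑t)))) * r (t0 + t) + c * (2 / (a * (2 * h / a + ↑t))) ^ 2
        = (1 - 2 / (2 * h / a + ↑t)) * r (t0 + t) + 4 * c / (a ^ 2 * (2 * h / a + ↑t) ^ 2) := by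
      field_simp
      ring
    rw [e1] at hg
    have hD2 : 0 < (2 * h / a + (t:ℝ)) ^ 2 := by positivity
    have step := mul_le_mul_of_nonneg_left hg hD2.le
    have e2 : (2 * h / a + (t:ℝ)) ^ 2 * ((1 - 2 / (2 * h / a + ↑t)) * r (t0 + t) + 4 * c / (a ^ 2 * (2 * h / a + ↑t) ^ 2))
        = ((2 * h / a + ↑t) ^ 2 - 2 * (2 * h / a + ↑t)) * r (t0 + t) + 4 * c / a ^ 2 := by
      field_simp
    rw [e2] at step
    have step2 : ((2 * h / a + ↑t) ^ 2 - 2 * (2 * h / a + ↑t)) * r (t0 + t)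
        ≤ (2 * h / a + ↑t - 1) ^ 2 * r (t0 + t) := by nlinarith [hr (t0 + t)]
    have ecast : (((t:ℕ) + 1 : ℕ) : ℝ) = (t:ℝ) + 1 := by push_cast; ring
    have esplit : 4 * c * ((t:ℝ) + 1) / a ^ 2 = 4 * c * (t:ℝ) / a ^ 2 + 4 * c / a ^ 2 := by ring
    have hgoal : (2 * h / a + ((t:ℝ) + 1) - 1) ^ 2 * r (t0 + (t + 1))
        ≤ (2 * h / a - 1) ^ 2 * r t0 + 4 * c * ((t:ℝ) + 1) / a ^ 2 := by
      have : (2 * h / a + ((t:ℝ) + 1) - 1) ^ 2 = (2 * h / a + (t:ℝ)) ^ 2 := by ring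
      rw [this, esplit]
      have hadd : t0 + (t + 1) = t0 + t + 1 := by omega
      rw [hadd]
      linarith
    rw [ecast]
    exact hgoal

lemma stich_expbound {a h : ℝ} (ha : 0 < a) (hha : a ≤ h) (n K : ℕ) (hn : (K:ℝ) ≤ 2 * n) :
    (1 - a / h) ^ n ≤ Real.exp (-(a * K) / (2 * h)) := by
  have hh : 0 < h := lt_of_lt_of_le ha hha
  have h1 : 0 ≤ 1 - a / h := by rw [sub_nonneg]; exact (div_le_one hh).mpr hha
  have h2 : 1 - a / h ≤ Real.exp (-(a / h)) := by
    linarith [Real.add_one_le_exp (-(a / h))]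
  calc (1 - a / h) ^ n ≤ (Real.exp (-(a / h))) ^ n := pow_le_pow_left₀ h1 h2 n
    _ = Real.exp ((n:ℝ) * (-(a / h))) := by rw [← Real.exp_nat_mul]
    _ ≤ Real.exp (-(a * K) / (2 * h)) := by
        apply Real.exp_le_exp.mpr
        rw [show (n:ℝ) * (-(a / h)) = (-(a * n)) / h by ring,
          div_le_div_iff₀ hh (by linarith : (0:ℝ) < 2 * h)]
        nlinarith [mul_pos ha hh]

set_option maxHeartbeats 1600000 in
theorem stmt_18 (r : ℕ → ℝ) (γ : ℕ → ℝ) (a c h : ℝ) (K : ℕ)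
    (hr : ∀ k, 0 ≤ r k) (ha : 0 < a) (hc : 0 ≤ c) (hha : a ≤ h) (hh : 0 < h)
    (hK : 1 ≤ K)
    (hγ : ∀ k, γ k =
      if (K : ℝ) ≤ h / a ∨ k < (K + 1) / 2 then 1 / h
      else 2 / (a * (2 * h / a + (k : ℝ) - ((K + 1) / 2 : ℕ))))
    (hrec : ∀ k, r (k + 1) ≤ (1 - a * γ k) * r k + c * γ k ^ 2) :
    r K ≤ (32 * h / a) * r 0 * Real.exp (-(a * K) / (2 * h)) + 36 * c / (a ^ 2 * K) := by
  have hKr : (1:ℝ) ≤ (K:ℝ) := by exact_mod_cast hK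
  have hX : 0 < Real.exp (-(a * K) / (2 * h)) := Real.exp_pos _
  have hr0 := hr 0
  have h32 : (1:ℝ) ≤ 32 * h / a := by
    rw [le_div_iff₀ ha]; linarith
  set X := Real.exp (-(a * K) / (2 * h)) with hXdef
  by_cases hcase : (K : ℝ) ≤ h / a
  · -- constant stepsize throughout
    have hγ1 : ∀ k < K, γ k = 1 / h := fun k _ => by
      rw [hγ k, if_pos (Or.inl hcase)]
    have hp1 := stich_phase1 ha hc hha hrec K hγ1
    have hexp : (1 - a / h) ^ K ≤ X := stich_expbound ha hha K K (by linarith)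
    have b1 : (1 - a / h) ^ K * r 0 ≤ 32 * h / a * r 0 * X := by
      have e1 : (1 - a / h) ^ K * r 0 ≤ X * r 0 := mul_le_mul_of_nonneg_right hexp hr0
      have e4 : X * r 0 ≤ 32 * h / a * (X * r 0) :=
        le_mul_of_one_le_left (mul_nonneg hX.le hr0) h32
      have e5 : 32 * h / a * (X * r 0) = 32 * h / a * r 0 * X := by ring
      linarith
    have haK : a * K ≤ h := by
      rw [le_div_iff₀ ha] at hcase; linarith
    have b2 : c / (a * h) ≤ 36 * c / (a ^ 2 * K) := by
      rw [div_le_div_iff₀ (by positivity) (by positivity)]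
      nlinarith [mul_le_mul_of_nonneg_left haK (mul_nonneg hc ha.le), mul_nonneg hc (mul_nonneg ha.le hh.le)]
    linarith
  · -- two-phase
    have hKa : h / a < (K:ℝ) := lt_of_not_ge hcase
    have hK2 : 2 ≤ K := by
      have : (1:ℝ) ≤ h / a := by rw [le_div_iff₀ ha]; linarith
      have h1K : (1:ℝ) < (K:ℝ) := lt_of_le_of_lt this hKa
      have : 1 < K := by exact_mod_cast h1K
      omega
    set t0 : ℕ := (K + 1) / 2 with ht0def
    set T : ℕ := K / 2 with hTdef
    have hsum : t0 + T = K := by omega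
    have hT1 : 1 ≤ T := by omega
    have h3T : K ≤ 3 * T := by omega
    have ht0K : K ≤ 2 * t0 := by omega
    -- phase 1
    have hγ1 : ∀ k < t0, γ k = 1 / h := fun k hk => by
      rw [hγ k, if_pos (Or.inr hk)]
    have hp1 := stich_phase1 ha hc hha hrec t0 hγ1
    -- phase 2
    have hγ2 : ∀ t : ℕ, γ (t0 + t) = 2 / (a * (2 * h / a + t)) := by
      intro t
      rw [hγ (t0 + t), if_neg]
      · congr 2
        push_cast
        ring
      · push_neg
        exact ⟨hKa, by omega⟩
    have hp2 := stich_phase2 ha hha hr hrec t0 hγ2 T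
    rw [hsum] at hp2
    -- notation
    have hβ2 : 2 ≤ 2 * h / a := by rw [le_div_iff₀ ha]; linarith
    have hTr : (1:ℝ) ≤ (T:ℝ) := by exact_mod_cast hT1
    have h3Tr : (K:ℝ) ≤ 3 * T := by exact_mod_cast h3T
    set β : ℝ := 2 * h / a with hβdef
    set D : ℝ := β + T - 1 with hDdef
    have hDT : (T:ℝ) ≤ D := by rw [hDdef]; linarith
    have hDβ : β - 1 ≤ D := by rw [hDdef]; linarith
    have hDpos : 0 < D := by linarith
    have hD2 : 0 < D ^ 2 := by positivity
    -- r K ≤ S / D^2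
    have hE : (1 - a / h) ^ t0 ≤ X := stich_expbound ha hha t0 K (by exact_mod_cast ht0K)
    have hE0 : 0 ≤ (1 - a / h) ^ t0 := by
      have : 0 ≤ 1 - a / h := by rw [sub_nonneg]; exact (div_le_one hh).mpr hha
      positivity
    have hS : D ^ 2 * r K ≤ (β - 1) ^ 2 * ((1 - a / h) ^ t0 * r 0 + c / (a * h)) + 4 * c * T / a ^ 2 := by
      have h1 : (β - 1) ^ 2 * r t0 ≤ (β - 1) ^ 2 * ((1 - a / h) ^ t0 * r 0 + c / (a * h)) :=
        mul_le_mul_of_nonneg_left hp1 (sq_nonneg _)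
      linarith [hp2]
    have hrK : r K ≤ ((β - 1) ^ 2 * ((1 - a / h) ^ t0 * r 0 + c / (a * h)) + 4 * c * T / a ^ 2) / D ^ 2 := by
      rw [le_div_iff₀ hD2]
      linarith
    have hsplit : ((β - 1) ^ 2 * ((1 - a / h) ^ t0 * r 0 + c / (a * h)) + 4 * c * T / a ^ 2) / D ^ 2
        = (β - 1) ^ 2 * ((1 - a / h) ^ t0 * r 0) / D ^ 2 + (β - 1) ^ 2 * c / (a * h * D ^ 2)
          + 4 * c * T / (a ^ 2 * D ^ 2) := by
      field_simp
    rw [hsplit] at hrK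
    -- bound term 1
    have b1 : (β - 1) ^ 2 * ((1 - a / h) ^ t0 * r 0) / D ^ 2 ≤ 32 * h / a * r 0 * X := by
      have e1 : (β - 1) ^ 2 * ((1 - a / h) ^ t0 * r 0) ≤ D ^ 2 * ((1 - a / h) ^ t0 * r 0) := by
        have : (β - 1) ^ 2 ≤ D ^ 2 := pow_le_pow_left₀ (by linarith) hDβ 2
        exact mul_le_mul_of_nonneg_right this (mul_nonneg hE0 hr0)
      have e2 : (β - 1) ^ 2 * ((1 - a / h) ^ t0 * r 0) / D ^ 2 ≤ (1 - a / h) ^ t0 * r 0 := by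
        rw [div_le_iff₀ hD2]; linarith
      have e3 : (1 - a / h) ^ t0 * r 0 ≤ X * r 0 := mul_le_mul_of_nonneg_right hE hr0
      have e4 : X * r 0 ≤ 32 * h / a * (X * r 0) :=
        le_mul_of_one_le_left (mul_nonneg hX.le hr0) h32
      have e5 : 32 * h / a * (X * r 0) = 32 * h / a * r 0 * X := by ring
      linarith
    -- bound term 2
    have b2 : (β - 1) ^ 2 * c / (a * h * D ^ 2) ≤ 6 * c / (a ^ 2 * K) := by
      rw [div_le_div_iff₀ (by positivity) (by positivity)]
      -- (β-1)^2 * c * (a^2 * K) ≤ 6 * c * (a * h * D^2)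
      -- note a * h = a^2 * β / 2
      have hah : a * h = a ^ 2 * β / 2 := by
        rw [hβdef]; field_simp
      rw [hah]
      have p1 : (β - 1) * T ≤ D ^ 2 := by
        have := mul_le_mul hDβ hDT (by linarith : (0:ℝ) ≤ (T:ℝ)) (by linarith : (0:ℝ) ≤ D)
        nlinarith
      have p2 : (β - 1) ^ 2 * (K:ℝ) ≤ 3 * ((β - 1) ^ 2 * T) := by
        nlinarith [sq_nonneg (β - 1)]
      have p4 : (β - 1) * ((β - 1) * T) ≤ (β - 1) * D ^ 2 :=
        mul_le_mul_of_nonneg_left p1 (by linarith)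
      have p5 : (β - 1) * D ^ 2 ≤ β * D ^ 2 := by nlinarith [hD2]
      have key : (β - 1) ^ 2 * (K:ℝ) ≤ 3 * (β * D ^ 2) := by nlinarith
      have ha2 : 0 < a ^ 2 := by positivity
      have hmul := mul_le_mul_of_nonneg_left key (mul_nonneg hc ha2.le)
      calc (β - 1) ^ 2 * c * (a ^ 2 * ↑K) = c * a ^ 2 * ((β - 1) ^ 2 * ↑K) := by ring
        _ ≤ c * a ^ 2 * (3 * (β * D ^ 2)) := hmul
        _ = 6 * c * (a ^ 2 * β / 2 * D ^ 2) := by ring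
    -- bound term 3
    have b3 : 4 * c * T / (a ^ 2 * D ^ 2) ≤ 12 * c / (a ^ 2 * K) := by
      rw [div_le_div_iff₀ (by positivity) (by positivity)]
      have hT2D : (T:ℝ) ^ 2 ≤ D ^ 2 := pow_le_pow_left₀ (by linarith) hDT 2
      have q1 : (T:ℝ) * K ≤ (T:ℝ) * (3 * T) := mul_le_mul_of_nonneg_left h3Tr (by linarith)
      have key : (T:ℝ) * K ≤ 3 * D ^ 2 := by nlinarith
      have ha2 : 0 < a ^ 2 := by positivity
      have hmul := mul_le_mul_of_nonneg_left key (mul_nonneg hc ha2.le)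
      calc 4 * c * (T:ℝ) * (a ^ 2 * ↑K) = 4 * (c * a ^ 2 * ((T:ℝ) * ↑K)) := by ring
        _ ≤ 4 * (c * a ^ 2 * (3 * D ^ 2)) := by linarith [hmul]
        _ = 12 * c * (a ^ 2 * D ^ 2) := by ring
    have hlast : 0 ≤ c / (a ^ 2 * K) := by positivity
    have hfin : 6 * c / (a ^ 2 * K) + 12 * c / (a ^ 2 * K) ≤ 36 * c / (a ^ 2 * K) := by
      have e : 6 * c / (a ^ 2 * K) + 12 * c / (a ^ 2 * K) = 18 * (c / (a ^ 2 * K)) := by ring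
      have e2 : 36 * c / (a ^ 2 * K) = 36 * (c / (a ^ 2 * K)) := by ring
      rw [e, e2]
      linarith
    linarith
end
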